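/- Let A be a Banach space, 1 < p ≤ ∞, 1/p + 1/q = 1. A bounded operator Λ : ℓ^q → A is compact if and only if Λ = Λ_a for some sequence a = (a_i) in A such that the set {(φ(a_i))_i : φ ∈ A*, ‖φ‖ ≤ 1} is totally bounded in ℓ^p, where Λ_a(β) = ∑ β_i a_i. -/

import Mathlib

open NormedSpace
open scoped ENNReal

set_option maxHeartbeats 1000000

lemma aux_mul_conj (z : ℂ) : z * (starRingEnd ℂ) z = ((‖z‖^2 : ℝ) : ℂ) := by
  rw [Complex.mul_conj]; norm_cast; rw [Complex.normSq_eq_norm_sq]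

lemma aux_dual_elem {p q : ℝ≥0∞} [Fact (1 ≤ q)] (hq0 : 0 < q.toReal)
    (hc : p.toReal.HolderConjugate q.toReal) (c : ℕ → ℂ) (s : Finset ℕ) :
    ∃ β : lp (fun _ : ℕ => ℂ) q, ‖β‖ ≤ 1 ∧
      HasSum (fun i => β i * c i)
        (((∑ i ∈ s, ‖c i‖ ^ p.toReal) ^ (1 / p.toReal) : ℝ) : ℂ) := by
  set pr := p.toReal
  set qr := q.toReal
  have hpr : 0 < pr := hc.pos
  set S := ∑ i ∈ s, ‖c i‖ ^ pr with hSdef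
  have hS0 : 0 ≤ S := Finset.sum_nonneg fun i _ => Real.rpow_nonneg (norm_nonneg _) _
  by_cases hS : S = 0
  · refine ⟨0, by simp, ?_⟩
    rw [hS, Real.zero_rpow (by positivity : 1 / pr ≠ 0)]
    simpa using (hasSum_zero : HasSum (fun _ : ℕ => (0:ℂ)) 0)
  have hSpos : 0 < S := lt_of_le_of_ne hS0 (Ne.symm hS)
  set T := S ^ (1 / qr) with hTdef
  have hTpos : 0 < T := Real.rpow_pos_of_pos hSpos _
  set d : ℕ → ℂ := fun i => (starRingEnd ℂ) (c i) * ((‖c i‖ ^ (pr - 2) / T : ℝ) : ℂ) with hddef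
  set β : lp (fun _ : ℕ => ℂ) q := ∑ i ∈ s, lp.single q i (d i) with hβdef
  have hβ : ∀ j, β j = if j ∈ s then d j else 0 := by
    intro j
    rw [hβdef, lp.coeFn_sum, Finset.sum_apply]
    simp only [lp.single_apply]
    exact Finset.sum_pi_single j d s
  have hd : ∀ i ∈ s, ‖d i‖ ^ qr = ‖c i‖ ^ pr / S := by
    intro i _
    by_cases hci : c i = 0
    · simp [hddef, hci, Real.zero_rpow hq0.ne', Real.zero_rpow hpr.ne']
    have hcpos : 0 < ‖c i‖ := norm_pos_iff.2 hci
    have hnd : ‖d i‖ = ‖c i‖ ^ (pr - 1) / T := by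
      rw [hddef]
      have hcc : ‖(starRingEnd ℂ) (c i)‖ = ‖c i‖ := by simp
      rw [norm_mul, hcc, Complex.norm_real, Real.norm_of_nonneg (div_nonneg (Real.rpow_nonneg (norm_nonneg _) _) hTpos.le), ← mul_div_assoc]
      congr 1
      have h := Real.rpow_add hcpos 1 (pr - 2)
      rw [Real.rpow_one] at h
      rw [← h]
      congr 1
      ring
    rw [hnd, Real.div_rpow (Real.rpow_nonneg (norm_nonneg _) _) hTpos.le, ← Real.rpow_mul (norm_nonneg _),
      hc.sub_one_mul_conj, hTdef, ← Real.rpow_mul hS0]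
    congr 2
    field_simp
    simp
  have hnormβ : ‖β‖ = 1 := by
    have h1 : ‖β‖ ^ qr = 1 := by
      rw [hβdef, lp.norm_sum_single hq0, Finset.sum_congr rfl hd, ← Finset.sum_div, ← hSdef,
        div_self hS]
    have h2 := congrArg (fun t : ℝ => t ^ (1/qr)) h1
    rwa [← Real.rpow_mul (norm_nonneg _), mul_one_div, div_self hq0.ne', Real.rpow_one,
      Real.one_rpow] at h2
  refine ⟨β, le_of_eq hnormβ, ?_⟩
  have hsupp : ∀ i ∉ s, β i * c i = 0 := fun i hi => by rw [hβ, if_neg hi, zero_mul]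
  have H := hasSum_sum_of_ne_finset_zero (L := SummationFilter.unconditional ℕ) hsupp
  have hterm : ∀ i ∈ s, β i * c i = ((‖c i‖ ^ pr / T : ℝ) : ℂ) := by
    intro i hi
    rw [hβ, if_pos hi, hddef]
    by_cases hci : c i = 0
    · simp [hci, Real.zero_rpow hpr.ne']
    have hcpos : 0 < ‖c i‖ := norm_pos_iff.2 hci
    calc (starRingEnd ℂ) (c i) * ((‖c i‖ ^ (pr - 2) / T : ℝ) : ℂ) * c i
        = (c i * (starRingEnd ℂ) (c i)) * ((‖c i‖ ^ (pr - 2) / T : ℝ) : ℂ) := by ring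
      _ = ((‖c i‖^2 * (‖c i‖ ^ (pr - 2) / T) : ℝ) : ℂ) := by rw [aux_mul_conj]; push_cast; ring
      _ = ((‖c i‖ ^ pr / T : ℝ) : ℂ) := by
          congr 1
          rw [← mul_div_assoc]
          congr 1
          rw [← Real.rpow_natCast ‖c i‖ 2, ← Real.rpow_add hcpos]
          congr 1
          push_cast; ring
  have hval : ∑ i ∈ s, β i * c i = ((S ^ (1/pr) : ℝ) : ℂ) := by
    rw [Finset.sum_congr rfl hterm, ← Complex.ofReal_sum]
    congr 1
    rw [← Finset.sum_div, ← hSdef, hTdef]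
    have h3 : S ^ ((1:ℝ) - 1/qr) = S / S ^ (1/qr) := by
      rw [Real.rpow_sub hSpos, Real.rpow_one]
    rw [← h3]
    congr 1
    have h4 := hc.inv_add_inv_eq_inv
    rw [← one_div, ← one_div] at h4
    linarith
  rw [← hval]
  exact H

lemma aux_q_ne_top {p q : ℝ≥0∞} (hp : 1 < p) (hpq : p⁻¹ + q⁻¹ = 1) : q ≠ ∞ := by
  intro h
  rw [h, ENNReal.inv_top, add_zero, ENNReal.inv_eq_one] at hpq
  exact hp.ne' hpq

lemma aux_q_eq_one {p q : ℝ≥0∞} (hpq : p⁻¹ + q⁻¹ = 1) (hptop : p = ∞) : q = 1 := by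
  rw [hptop, ENNReal.inv_top, zero_add, ENNReal.inv_eq_one] at hpq
  exact hpq

lemma aux_conj_real {p q : ℝ≥0∞} [Fact (1 ≤ q)] (hp : 1 < p) (hptop : p ≠ ∞)
    (hpq : p⁻¹ + q⁻¹ = 1) : p.toReal.HolderConjugate q.toReal := by
  have hq0 : q ≠ 0 := by
    have : (1:ℝ≥0∞) ≤ q := Fact.out
    exact fun h => by simp [h] at this
  have hp0 : p ≠ 0 := (zero_lt_one.trans hp).ne'
  rw [Real.holderConjugate_iff]
  constructor
  · have := (ENNReal.toReal_lt_toReal ENNReal.one_ne_top hptop).2 hp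
    simpa using this
  · have h1 : (p⁻¹ + q⁻¹).toReal = (1:ℝ≥0∞).toReal := by rw [hpq]
    rw [ENNReal.toReal_add (by simp [hp0]) (by simp [hq0]), ENNReal.toReal_inv,
      ENNReal.toReal_inv, ENNReal.toReal_one] at h1
    exact h1

lemma aux_norm_one {q : ℝ≥0∞} (hq1 : q = 1) (β : lp (fun _ : ℕ => ℂ) q) :
    ∑' i, ‖β i‖ = ‖β‖ := by
  subst hq1
  have := lp.norm_eq_tsum_rpow (p := 1) (by norm_num) β
  simpa using this.symm

lemma aux_holder {p q : ℝ≥0∞} [Fact (1 ≤ p)] [Fact (1 ≤ q)] (hp : 1 < p)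
    (hpq : p⁻¹ + q⁻¹ = 1) (β : lp (fun _ : ℕ => ℂ) q) (x : lp (fun _ : ℕ => ℂ) p) :
    Summable (fun i => β i * x i) ∧ ‖∑' i, β i * x i‖ ≤ ‖β‖ * ‖x‖ := by
  have key : Summable (fun i => ‖β i‖ * ‖x i‖) ∧ ∑' i, ‖β i‖ * ‖x i‖ ≤ ‖β‖ * ‖x‖ := by
    by_cases hptop : p = ∞
    · have hq1 : q = 1 := aux_q_eq_one hpq hptop
      have hsum1 : Summable (fun i => ‖β i‖) := by
        have := (lp.memℓp β).summable (by simp [hq1] : 0 < q.toReal)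
        simpa [hq1] using this
      have hle : ∀ i, ‖β i‖ * ‖x i‖ ≤ ‖β i‖ * ‖x‖ := fun i => by
        have := lp.norm_apply_le_norm (by simp [hptop]) x i
        exact mul_le_mul_of_nonneg_left this (norm_nonneg _)
      have hs : Summable (fun i => ‖β i‖ * ‖x i‖) :=
        Summable.of_nonneg_of_le (fun i => by positivity) hle (hsum1.mul_right _)
      refine ⟨hs, ?_⟩
      calc ∑' i, ‖β i‖ * ‖x i‖ ≤ ∑' i, ‖β i‖ * ‖x‖ :=
            Summable.tsum_le_tsum hle hs (hsum1.mul_right _)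
        _ = ‖β‖ * ‖x‖ := by rw [tsum_mul_right, aux_norm_one hq1]
    · have hc := aux_conj_real hp hptop hpq
      obtain ⟨h1, h2⟩ := lp.tsum_mul_le_mul_norm hc x β
      constructor
      · have := h1
        simpa [mul_comm] using this
      · calc ∑' i, ‖β i‖ * ‖x i‖ = ∑' i, ‖x i‖ * ‖β i‖ := by simp [mul_comm]
          _ ≤ ‖x‖ * ‖β‖ := h2
          _ = ‖β‖ * ‖x‖ := mul_comm _ _
  have hs : Summable (fun i => β i * x i) :=
    Summable.of_norm (by simpa [norm_mul] using key.1)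
  refine ⟨hs, ?_⟩
  calc ‖∑' i, β i * x i‖ ≤ ∑' i, ‖β i * x i‖ := norm_tsum_le_tsum_norm (by simpa [norm_mul] using key.1)
    _ = ∑' i, ‖β i‖ * ‖x i‖ := by simp [norm_mul]
    _ ≤ ‖β‖ * ‖x‖ := key.2

lemma aux_hq0 {p q : ℝ≥0∞} [Fact (1 ≤ q)] (hp : 1 < p) (hpq : p⁻¹ + q⁻¹ = 1) :
    0 < q.toReal := by
  refine ENNReal.toReal_pos ?_ (aux_q_ne_top hp hpq)
  have h1 : (1:ℝ≥0∞) ≤ q := Fact.out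
  exact fun hz => by simp [hz] at h1

lemma aux_single_dual {q : ℝ≥0∞} [Fact (1 ≤ q)] (hq0 : 0 < q.toReal) (c : ℕ → ℂ) (i : ℕ) :
    ∃ β : lp (fun _ : ℕ => ℂ) q, ‖β‖ ≤ 1 ∧
      HasSum (fun j => β j * c j) ((‖c i‖ : ℝ) : ℂ) := by
  by_cases hci : c i = 0
  · exact ⟨0, by simp, by simpa [hci] using (hasSum_zero : HasSum (fun _ : ℕ => (0:ℂ)) 0)⟩
  have hcpos : 0 < ‖c i‖ := norm_pos_iff.2 hci
  set a : ℂ := (starRingEnd ℂ) (c i) * ((‖c i‖⁻¹ : ℝ) : ℂ) with hadef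
  have hna : ‖a‖ = 1 := by
    rw [hadef, norm_mul]
    have h1 : ‖(starRingEnd ℂ) (c i)‖ = ‖c i‖ := by simp
    rw [h1, Complex.norm_real, Real.norm_of_nonneg (inv_nonneg.2 hcpos.le),
      mul_inv_cancel₀ hcpos.ne']
  refine ⟨lp.single q i a, le_of_eq ((lp.norm_single (E := fun _ : ℕ => ℂ) (zero_lt_one.trans_le (Fact.out : (1:ℝ≥0∞) ≤ q)) i a).trans hna), ?_⟩
  have hcoe : ∀ j, ((lp.single q i a : lp (fun _ : ℕ => ℂ) q) j : ℂ) = if j = i then a else 0 :=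
    fun j => by
      rcases eq_or_ne j i with h|h
      · subst h; rw [if_pos rfl]; exact lp.single_apply_self (E := fun _ : ℕ => ℂ) q j a
      · rw [if_neg h]; exact lp.single_apply_ne (E := fun _ : ℕ => ℂ) q i a h
  have H := _root_.hasSum_single
    (f := fun j => ((lp.single q i a : lp (fun _ : ℕ => ℂ) q) j : ℂ) * c j) i
    (fun j hj => by simp only; rw [hcoe, if_neg hj, zero_mul])
  simp only [hcoe, if_true] at H
  have hval : a * c i = ((‖c i‖ : ℝ) : ℂ) := by
    rw [hadef]
    calc (starRingEnd ℂ) (c i) * ((‖c i‖⁻¹ : ℝ) : ℂ) * c i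
        = (c i * (starRingEnd ℂ) (c i)) * ((‖c i‖⁻¹ : ℝ) : ℂ) := by ring
      _ = ((‖c i‖^2 * ‖c i‖⁻¹ : ℝ) : ℂ) := by rw [aux_mul_conj]; push_cast; ring
      _ = ((‖c i‖ : ℝ) : ℂ) := by rw [sq, mul_assoc, mul_inv_cancel₀ hcpos.ne', mul_one]
  rw [hval] at H
  have heq : (fun j => ((lp.single q i a : lp (fun _ : ℕ => ℂ) q) j : ℂ) * c j)
      = fun j => (if j = i then a else 0) * c j := funext fun j => by rw [hcoe]
  rw [heq]
  exact H

lemma aux_norm_le {p q : ℝ≥0∞} [Fact (1 ≤ p)] [Fact (1 ≤ q)] (hp : 1 < p)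
    (hpq : p⁻¹ + q⁻¹ = 1) (x : lp (fun _ : ℕ => ℂ) p) {M : ℝ} (hM : 0 ≤ M)
    (h : ∀ β : lp (fun _ : ℕ => ℂ) q, ‖β‖ ≤ 1 →
      ∀ z : ℂ, HasSum (fun i => β i * x i) z → ‖z‖ ≤ M) : ‖x‖ ≤ M := by
  have hq0 : 0 < q.toReal := by
    refine ENNReal.toReal_pos ?_ (aux_q_ne_top hp hpq)
    have : (1:ℝ≥0∞) ≤ q := Fact.out
    exact fun hz => by simp [hz] at this
  by_cases hptop : p = ∞
  · subst hptop
    refine lp.norm_le_of_forall_le hM fun i => ?_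
    obtain ⟨β, hβ, hsum⟩ := aux_single_dual hq0 (fun j => x j) i
    have := h β hβ _ hsum
    rwa [Complex.norm_real, Real.norm_of_nonneg (norm_nonneg _)] at this
  · have hc := aux_conj_real hp hptop hpq
    have hpr : 0 < p.toReal := hc.pos
    refine lp.norm_le_of_forall_sum_le hpr hM fun s => ?_
    obtain ⟨β, hβ, hsum⟩ := aux_dual_elem hq0 hc (fun j => x j) s
    have hle := h β hβ _ hsum
    rw [Complex.norm_real, Real.norm_of_nonneg (Real.rpow_nonneg
      (Finset.sum_nonneg fun i _ => Real.rpow_nonneg (norm_nonneg _) _) _)] at hle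
    have hS0 : 0 ≤ ∑ i ∈ s, ‖x i‖ ^ p.toReal :=
      Finset.sum_nonneg fun i _ => Real.rpow_nonneg (norm_nonneg _) _
    have h5 := Real.rpow_le_rpow (Real.rpow_nonneg hS0 _) hle hpr.le
    rwa [← Real.rpow_mul hS0, one_div_mul_cancel hpr.ne', Real.rpow_one] at h5

lemma aux_mem_shadow {A : Type*} [NormedAddCommGroup A] [NormedSpace ℂ A]
    {p q : ℝ≥0∞} [Fact (1 ≤ p)] [Fact (1 ≤ q)] (hp : 1 < p) (hpq : p⁻¹ + q⁻¹ = 1)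
    (Λ : lp (fun _ : ℕ => ℂ) q →L[ℂ] A) (a : ℕ → A)
    (hsum : ∀ β : lp (fun _ : ℕ => ℂ) q, HasSum (fun i => β i • a i) (Λ β))
    (φ : StrongDual ℂ A) (hφ : ‖φ‖ ≤ 1) : Memℓp (fun i => φ (a i)) p := by
  have hq0 : 0 < q.toReal := aux_hq0 hp hpq
  have key : ∀ β : lp (fun _ : ℕ => ℂ) q, ‖β‖ ≤ 1 →
      ∀ z : ℂ, HasSum (fun i => β i * φ (a i)) z → ‖z‖ ≤ ‖Λ‖ := by
    intro β hβ z hz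
    have h1 : HasSum (fun i => φ (β i • a i)) (φ (Λ β)) := φ.hasSum (hsum β)
    simp only [map_smul, smul_eq_mul] at h1
    rw [hz.unique h1]
    calc ‖φ (Λ β)‖ ≤ ‖φ‖ * ‖Λ β‖ := φ.le_opNorm _
      _ ≤ 1 * (‖Λ‖ * ‖β‖) :=
        mul_le_mul hφ (Λ.le_opNorm β) (norm_nonneg _) zero_le_one
      _ ≤ ‖Λ‖ := by rw [one_mul]; exact mul_le_of_le_one_right (norm_nonneg _) hβ
  by_cases hptop : p = ∞
  · subst hptop
    apply memℓp_infty
    refine ⟨‖Λ‖, ?_⟩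
    rintro - ⟨i, rfl⟩
    obtain ⟨β, hβ, hβsum⟩ := aux_single_dual hq0 (fun j => φ (a j)) i
    have := key β hβ _ hβsum
    simpa [Complex.norm_real, Real.norm_of_nonneg (norm_nonneg _)] using this
  · have hc := aux_conj_real hp hptop hpq
    have hpr : 0 < p.toReal := hc.pos
    apply memℓp_gen' (C := ‖Λ‖ ^ p.toReal)
    intro s
    obtain ⟨β, hβ, hβsum⟩ := aux_dual_elem hq0 hc (fun j => φ (a j)) s
    have hle := key β hβ _ hβsum
    have hS0 : 0 ≤ ∑ i ∈ s, ‖φ (a i)‖ ^ p.toReal :=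
      Finset.sum_nonneg fun i _ => Real.rpow_nonneg (norm_nonneg _) _
    rw [Complex.norm_real, Real.norm_of_nonneg (Real.rpow_nonneg hS0 _)] at hle
    have h5 := Real.rpow_le_rpow (Real.rpow_nonneg hS0 _) hle hpr.le
    rwa [← Real.rpow_mul hS0, one_div_mul_cancel hpr.ne', Real.rpow_one] at h5

lemma aux_tb_pi {n : ℕ} {s : Set (Fin n → ℂ)} {R : ℝ} (h : ∀ f ∈ s, ∀ k, ‖f k‖ ≤ R) :
    TotallyBounded s := by
  have hsub : s ⊆ Metric.closedBall 0 (max R 0) := by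
    intro f hf
    rw [Metric.mem_closedBall, dist_zero_right]
    rw [pi_norm_le_iff_of_nonneg (le_max_right _ _)]
    exact fun k => (h f hf k).trans (le_max_left _ _)
  exact (isCompact_closedBall _ _).totallyBounded.subset hsub

lemma aux_tb {X : Type*} [PseudoMetricSpace X] {s : Set X}
    (h : ∀ ε : ℝ, 0 < ε → ∃ (n : ℕ) (g : X → (Fin n → ℂ)) (δ : ℝ), 0 < δ ∧
      TotallyBounded (g '' s) ∧
      ∀ x ∈ s, ∀ x' ∈ s, dist (g x) (g x') < δ → dist x x' < ε) :
    TotallyBounded s := by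
  rw [Metric.totallyBounded_iff]
  intro ε hε
  rcases Set.eq_empty_or_nonempty s with hs | ⟨x0, hx0⟩
  · exact ⟨∅, Set.finite_empty, by simp [hs]⟩
  haveI : Nonempty X := ⟨x0⟩
  obtain ⟨n, g, δ, hδ, htb, hest⟩ := h ε hε
  obtain ⟨t, hts, htf, hcov⟩ :=
    totallyBounded_iff_subset.1 htb {p | dist p.1 p.2 < δ} (Metric.dist_mem_uniformity hδ)
  have hchoice : ∀ y ∈ t, ∃ x, x ∈ s ∧ g x = y := fun y hy => hts hy
  choose! xy hxy1 hxy2 using hchoice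
  refine ⟨xy '' t, htf.image _, ?_⟩
  intro x hx
  have hgx : g x ∈ ⋃ y ∈ t, {z | dist z y < δ} := hcov (Set.mem_image_of_mem g hx)
  rw [Set.mem_iUnion₂] at hgx
  obtain ⟨y, hy, hdy⟩ := hgx
  rw [Set.mem_iUnion₂]
  refine ⟨xy y, Set.mem_image_of_mem _ hy, ?_⟩
  rw [Metric.mem_ball]
  apply hest x hx (xy y) (hxy1 y hy)
  rw [hxy2 y hy]
  exact hdy

/-- Characterization of compact operators `Λ : ℓ^q → A` (`1 < p ≤ ∞`, `1/p + 1/q = 1`):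
`Λ` is compact iff `Λ = Λ_a` for a sequence `a` whose dual shadow is totally bounded
in `ℓ^p`. -/
theorem isCompactOperator_iff_diagonal_totallyBounded_shadow {A : Type*}
    [NormedAddCommGroup A] [NormedSpace ℂ A] [CompleteSpace A]
    (p q : ℝ≥0∞) (hp : 1 < p) [Fact (1 ≤ p)] [Fact (1 ≤ q)] (hpq : p⁻¹ + q⁻¹ = 1)
    (Λ : lp (fun _ : ℕ => ℂ) q →L[ℂ] A) :
    IsCompactOperator ⇑Λ ↔
      ∃ a : ℕ → A,
        TotallyBounded
          {x : lp (fun _ : ℕ => ℂ) p | ∃ φ : StrongDual ℂ A, ‖φ‖ ≤ 1 ∧ ∀ i, x i = φ (a i)} ∧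
        ∀ β : lp (fun _ : ℕ => ℂ) q, HasSum (fun i => β i • a i) (Λ β) := by
  constructor
  · intro hcomp

    have hq0 : 0 < q.toReal := aux_hq0 hp hpq
    have hqtop : q ≠ ∞ := aux_q_ne_top hp hpq
    set a : ℕ → A := fun i => Λ (lp.single q i 1) with hadef
    have hsum : ∀ β : lp (fun _ : ℕ => ℂ) q, HasSum (fun i => β i • a i) (Λ β) := by
      intro β
      have h1 := lp.hasSum_single hqtop β
      have h2 := Λ.hasSum h1
      have h3 : ∀ i, Λ (lp.single q i ((β : ∀ _ : ℕ, ℂ) i)) = β i • a i := by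
        intro i
        have h4 := lp.single_smul (E := fun _ : ℕ => ℂ) (𝕜 := ℂ) q i (β i) (1 : ℂ)
        rw [smul_eq_mul, mul_one] at h4
        rw [h4, map_smul, hadef]
      exact (funext h3 : _) ▸ h2
    refine ⟨a, ?_, hsum⟩
    apply aux_tb
    intro ε hε
    obtain ⟨K, hKc, hKsub⟩ :=
      IsCompactOperator.image_closedBall_subset_compact (f := (Λ : lp (fun _ : ℕ => ℂ) q →ₗ[ℂ] A))
        hcomp 1
    have hT : TotallyBounded (⇑Λ '' Metric.closedBall 0 1) := hKc.totallyBounded.subset hKsub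
    obtain ⟨t, htf, hcov⟩ := Metric.totallyBounded_iff.1 hT (ε/8) (by positivity)
    haveI := htf.fintype
    set n := Fintype.card ↥t with hndef
    set e := Fintype.equivFin ↥t with hedef
    set y : Fin n → A := fun k => (e.symm k : A) with hydef
    set S := {x : lp (fun _ : ℕ => ℂ) p | ∃ φ : StrongDual ℂ A, ‖φ‖ ≤ 1 ∧ ∀ i, x i = φ (a i)} with hSdef
    have hch : ∀ x : lp (fun _ : ℕ => ℂ) p, ∃ φ : StrongDual ℂ A,
        x ∈ S → ‖φ‖ ≤ 1 ∧ ∀ i, x i = φ (a i) := by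
      intro x
      by_cases hx : x ∈ S
      · obtain ⟨φ, hφ⟩ := hx
        exact ⟨φ, fun _ => hφ⟩
      · exact ⟨0, fun h => absurd h hx⟩
    choose Φ hΦ using hch
    refine ⟨n, fun x k => Φ x (y k), ε/2, by positivity, ?_, ?_⟩
    · obtain ⟨R, hR⟩ := (Set.finite_range fun k => ‖y k‖).bddAbove
      apply aux_tb_pi (R := R)
      rintro - ⟨x, hx, rfl⟩ k
      calc ‖Φ x (y k)‖ ≤ ‖Φ x‖ * ‖y k‖ := (Φ x).le_opNorm _
        _ ≤ 1 * R := mul_le_mul (hΦ x hx).1 (hR ⟨k, rfl⟩) (norm_nonneg _) zero_le_one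
        _ = R := one_mul R
    · intro x hx x' hx' hdist
      obtain ⟨hφ1, hφ2⟩ := hΦ x hx
      obtain ⟨hψ1, hψ2⟩ := hΦ x' hx'
      rw [dist_eq_norm]
      have hkey : ‖x - x'‖ ≤ ε/2 + ε/4 := by
        apply aux_norm_le hp hpq _ (by positivity)
        intro β hβ z hz
        have h1 : HasSum (fun i => β i * Φ x (a i)) (Φ x (Λ β)) := by
          have := (Φ x).hasSum (hsum β)
          simpa only [map_smul, smul_eq_mul] using this
        have h2 : HasSum (fun i => β i * Φ x' (a i)) (Φ x' (Λ β)) := by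
          have := (Φ x').hasSum (hsum β)
          simpa only [map_smul, smul_eq_mul] using this
        have heq : (fun i => β i * ((x - x' : lp (fun _ : ℕ => ℂ) p) i))
            = fun i => β i * Φ x (a i) - β i * Φ x' (a i) := by
          funext i
          rw [lp.coeFn_sub, Pi.sub_apply, hφ2 i, hψ2 i]
          ring
        rw [heq] at hz
        have hz2 : z = Φ x (Λ β) - Φ x' (Λ β) := hz.unique (h1.sub h2)
        have hmem : Λ β ∈ ⇑Λ '' Metric.closedBall 0 1 :=
          Set.mem_image_of_mem _ (Metric.mem_closedBall.2 (by rwa [dist_zero_right]))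
        obtain ⟨u, hu, hdu⟩ := Set.mem_iUnion₂.1 (hcov hmem)
        rw [Metric.mem_ball, dist_eq_norm] at hdu
        set k := e ⟨u, hu⟩ with hkdef
        have hyk : y k = u := by
          show ((e.symm (e ⟨u, hu⟩) : ↥t) : A) = u
          rw [Equiv.symm_apply_apply]
        have hcoord : ‖Φ x u - Φ x' u‖ < ε/2 := by
          have h6 : dist (Φ x (y k)) (Φ x' (y k)) ≤
              dist (fun k => Φ x (y k)) (fun k => Φ x' (y k)) := dist_le_pi_dist (X := fun _ : Fin n => ℂ) (fun k => Φ x (y k)) (fun k => Φ x' (y k)) k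
          rw [hyk] at h6
          rw [← dist_eq_norm]
          exact lt_of_le_of_lt h6 hdist
        rw [hz2]
        have e1 : ‖Φ x (Λ β) - Φ x u‖ ≤ ε/8 := by
          rw [← map_sub]
          calc ‖Φ x (Λ β - u)‖ ≤ ‖Φ x‖ * ‖Λ β - u‖ := (Φ x).le_opNorm _
            _ ≤ 1 * (ε/8) := mul_le_mul hφ1 hdu.le (norm_nonneg _) zero_le_one
            _ = ε/8 := one_mul _
        have e2 : ‖Φ x' (Λ β) - Φ x' u‖ ≤ ε/8 := by
          rw [← map_sub]
          calc ‖Φ x' (Λ β - u)‖ ≤ ‖Φ x'‖ * ‖Λ β - u‖ := (Φ x').le_opNorm _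
            _ ≤ 1 * (ε/8) := mul_le_mul hψ1 hdu.le (norm_nonneg _) zero_le_one
            _ = ε/8 := one_mul _
        calc ‖Φ x (Λ β) - Φ x' (Λ β)‖
            ≤ ‖Φ x (Λ β) - Φ x u‖ + ‖Φ x u - Φ x' u‖ + ‖Φ x' u - Φ x' (Λ β)‖ :=
              norm_sub_le_norm_sub_add_norm_sub _ _ _ |>.trans (by
                gcongr
                exact norm_sub_le_norm_sub_add_norm_sub _ _ _)
          _ ≤ ε/8 + ε/2 + ε/8 := by
              refine add_le_add (add_le_add e1 hcoord.le) ?_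
              rw [norm_sub_rev]
              exact e2
          _ = ε/2 + ε/4 := by ring
      linarith
  · rintro ⟨a, hTB, hsum⟩

    have him : TotallyBounded (⇑Λ '' Metric.closedBall 0 1) := by
      apply aux_tb
      intro ε hε
      obtain ⟨t, htf, hcov⟩ := Metric.totallyBounded_iff.1 hTB (ε/8) (by positivity)
      haveI := htf.fintype
      set n := Fintype.card ↥t with hndef
      set e := Fintype.equivFin ↥t with hedef
      set y : Fin n → lp (fun _ : ℕ => ℂ) p := fun k => (e.symm k : lp (fun _ : ℕ => ℂ) p)
        with hydef
      have hch : ∀ z : A, ∃ β : lp (fun _ : ℕ => ℂ) q,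
          z ∈ ⇑Λ '' Metric.closedBall 0 1 → ‖β‖ ≤ 1 ∧ Λ β = z := by
        intro z
        by_cases hz : z ∈ ⇑Λ '' Metric.closedBall 0 1
        · obtain ⟨β, hβ, hβz⟩ := hz
          rw [Metric.mem_closedBall, dist_zero_right] at hβ
          exact ⟨β, fun _ => ⟨hβ, hβz⟩⟩
        · exact ⟨0, fun h => absurd h hz⟩
      choose B hB using hch
      set g : A → Fin n → ℂ := fun z k => ∑' i, B z i * y k i with hgdef
      refine ⟨n, g, ε/2, by positivity, ?_, ?_⟩
      · obtain ⟨R, hR⟩ := (Set.finite_range fun k => ‖y k‖).bddAbove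
        apply aux_tb_pi (R := R)
        rintro - ⟨z, hz, rfl⟩ k
        calc ‖g z k‖ ≤ ‖B z‖ * ‖y k‖ := (aux_holder hp hpq (B z) (y k)).2
          _ ≤ 1 * R := mul_le_mul (hB z hz).1 (hR ⟨k, rfl⟩) (norm_nonneg _) zero_le_one
          _ = R := one_mul R
      · intro z hz z' hz' hdist
        obtain ⟨hβ1, hβ2⟩ := hB z hz
        obtain ⟨hγ1, hγ2⟩ := hB z' hz'
        rw [dist_eq_norm]
        have hkey : ‖z - z'‖ ≤ ε/2 + ε/4 := by
          apply NormedSpace.norm_le_dual_bound ℂ _ (by positivity)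
          intro f
          by_cases hf : f = 0
          · simp [hf]
          have hfn : 0 < ‖f‖ := norm_pos_iff.2 hf
          set ψ : StrongDual ℂ A := ((‖f‖ : ℂ))⁻¹ • f with hψdef
          have hψ1 : ‖ψ‖ = 1 := by
            rw [hψdef, norm_smul, norm_inv, Complex.norm_real, Real.norm_of_nonneg hfn.le,
              inv_mul_cancel₀ hfn.ne']
          have hmemψ : Memℓp (fun i => ψ (a i)) p :=
            aux_mem_shadow hp hpq Λ a hsum ψ hψ1.le
          set xψ : lp (fun _ : ℕ => ℂ) p := ⟨fun i => ψ (a i), hmemψ⟩ with hxψdef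
          have hxψcoe : ∀ i, xψ i = ψ (a i) := fun i => rfl
          have hxψS : xψ ∈ {x : lp (fun _ : ℕ => ℂ) p |
              ∃ φ : StrongDual ℂ A, ‖φ‖ ≤ 1 ∧ ∀ i, x i = φ (a i)} := ⟨ψ, hψ1.le, fun i => rfl⟩
          obtain ⟨u, hu, hdu⟩ := Set.mem_iUnion₂.1 (hcov hxψS)
          rw [Metric.mem_ball, dist_eq_norm] at hdu
          set k := e ⟨u, hu⟩ with hkdef
          have hyk : y k = u := by
            show ((e.symm (e ⟨u, hu⟩) : ↥t) : lp (fun _ : ℕ => ℂ) p) = u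
            rw [Equiv.symm_apply_apply]
          -- pairing identities
          have pair : ∀ β' : lp (fun _ : ℕ => ℂ) q,
              HasSum (fun i => β' i * ψ (a i)) (ψ (Λ β')) := fun β' => by
            simpa only [map_smul, smul_eq_mul] using ψ.hasSum (hsum β')
          have hβψ : ∑' i, B z i * xψ i = ψ z := by
            have h := (pair (B z)).tsum_eq
            rw [hβ2] at h
            simpa only [hxψcoe] using h
          have hγψ : ∑' i, B z' i * xψ i = ψ z' := by
            have h := (pair (B z')).tsum_eq
            rw [hγ2] at h
            simpa only [hxψcoe] using h
          -- tail estimates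
          have tail : ∀ β' : lp (fun _ : ℕ => ℂ) q, ‖β'‖ ≤ 1 →
              ‖(∑' i, β' i * xψ i) - ∑' i, β' i * u i‖ ≤ ε/8 := by
            intro β' hβ'
            have h1 := (aux_holder hp hpq β' xψ).1
            have h2 := (aux_holder hp hpq β' u).1
            have h3 : (∑' i, β' i * xψ i) - ∑' i, β' i * u i
                = ∑' i, β' i * ((xψ - u : lp (fun _ : ℕ => ℂ) p) i) := by
              rw [← Summable.tsum_sub h1 h2]
              congr 1
              funext i
              rw [lp.coeFn_sub, Pi.sub_apply]
              ring
            rw [h3]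
            calc ‖∑' i, β' i * ((xψ - u : lp (fun _ : ℕ => ℂ) p) i)‖
                ≤ ‖β'‖ * ‖xψ - u‖ := (aux_holder hp hpq β' _).2
              _ ≤ 1 * (ε/8) := mul_le_mul hβ' hdu.le (norm_nonneg _) zero_le_one
              _ = ε/8 := one_mul _
          have hcoord : ‖(∑' i, B z i * u i) - ∑' i, B z' i * u i‖ < ε/2 := by
            have h6 : dist (g z k) (g z' k) ≤ dist (g z) (g z') :=
              dist_le_pi_dist (X := fun _ : Fin n => ℂ) (g z) (g z') k
            have h7 : g z k = ∑' i, B z i * u i := by rw [hgdef]; simp only; rw [hyk]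
            have h8 : g z' k = ∑' i, B z' i * u i := by rw [hgdef]; simp only; rw [hyk]
            rw [h7, h8, dist_eq_norm] at h6
            exact lt_of_le_of_lt h6 hdist
          have hψbound : ‖ψ z - ψ z'‖ ≤ ε/2 + ε/4 := by
            rw [← hβψ, ← hγψ]
            calc ‖(∑' i, B z i * xψ i) - ∑' i, B z' i * xψ i‖
                ≤ ‖(∑' i, B z i * xψ i) - ∑' i, B z i * u i‖
                  + ‖(∑' i, B z i * u i) - ∑' i, B z' i * xψ i‖ :=
                  norm_sub_le_norm_sub_add_norm_sub _ _ _
              _ ≤ ‖(∑' i, B z i * xψ i) - ∑' i, B z i * u i‖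
                  + (‖(∑' i, B z i * u i) - ∑' i, B z' i * u i‖
                    + ‖(∑' i, B z' i * u i) - ∑' i, B z' i * xψ i‖) :=
                  add_le_add_right (norm_sub_le_norm_sub_add_norm_sub _ _ _) _
              _ ≤ ε/8 + (ε/2 + ε/8) := by
                  refine add_le_add (tail _ hβ1) (add_le_add hcoord.le ?_)
                  rw [norm_sub_rev]
                  exact tail _ hγ1
              _ = ε/2 + ε/4 := by ring
          have hfψ : f = ((‖f‖ : ℂ)) • ψ := by
            rw [hψdef, smul_inv_smul₀]
            simpa using hfn.ne'
          have happ : f (z - z') = (‖f‖ : ℂ) * ψ (z - z') := by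
            conv_lhs => rw [hfψ]
            simp
          calc ‖f (z - z')‖ = ‖f‖ * ‖ψ (z - z')‖ := by
                rw [happ, norm_mul, Complex.norm_real, Real.norm_of_nonneg hfn.le]
            _ ≤ ‖f‖ * (ε/2 + ε/4) := by
                refine mul_le_mul_of_nonneg_left ?_ hfn.le
                rw [map_sub]
                exact hψbound
            _ = (ε/2 + ε/4) * ‖f‖ := mul_comm _ _
        linarith
    have hcl : IsCompact (closure (⇑Λ '' Metric.closedBall 0 1)) :=
      TotallyBounded.isCompact_of_isClosed him.closure isClosed_closure
    exact (isCompactOperator_iff_isCompact_closure_image_closedBall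
      (f := (Λ : lp (fun _ : ℕ => ℂ) q →ₗ[ℂ] A)) one_pos).2 hcl
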